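/- Define on the space of positive definite symmetric n×n real matrices the distance d(Z₁, Z₂) := |log λ_max(B₂B₁⁻¹)ᵀ(B₂B₁⁻¹)| + |log λ_min(B₂B₁⁻¹)ᵀ(B₂B₁⁻¹)| where Zᵢ = BᵢᵀBᵢ. Then for any invertible n×n matrix A, d(AᵀZ₁A, AᵀZ₂A) = d(Z₁, Z₂). -/

import Mathlib

open Matrix

/-- The Gram matrix `Mᵀ * M` of a real matrix is Hermitian (symmetric). -/
theorem gramHerm {n : ℕ} (M : Matrix (Fin n) (Fin n) ℝ) : (Mᵀ * M).IsHermitian := by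
  simpa [Matrix.conjTranspose_eq_transpose_of_trivial] using Matrix.isHermitian_conjTranspose_mul_self M

/-- The largest eigenvalue of `Mᵀ * M`. -/
noncomputable def lamMax {n : ℕ} (M : Matrix (Fin n) (Fin n) ℝ) : ℝ :=
  ⨆ i, (gramHerm M).eigenvalues i

/-- The smallest eigenvalue of `Mᵀ * M`. -/
noncomputable def lamMin {n : ℕ} (M : Matrix (Fin n) (Fin n) ℝ) : ℝ :=
  ⨅ i, (gramHerm M).eigenvalues i

theorem lam_eq_of_spectrum_eq {n : ℕ} {M N : Matrix (Fin n) (Fin n) ℝ}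
    (h : spectrum ℝ (Mᵀ * M) = spectrum ℝ (Nᵀ * N)) :
    lamMax M = lamMax N ∧ lamMin M = lamMin N := by
  have hr : Set.range (gramHerm M).eigenvalues = Set.range (gramHerm N).eigenvalues := by
    rw [← (gramHerm M).spectrum_real_eq_range_eigenvalues,
      ← (gramHerm N).spectrum_real_eq_range_eigenvalues, h]
  constructor
  · rw [lamMax, lamMax, ← sSup_range, ← sSup_range, hr]
  · rw [lamMin, lamMin, ← sInf_range, ← sInf_range, hr]

/-- The distance `d(Z₁,Z₂) = |log λ_max (B₂B₁⁻¹)ᵀ(B₂B₁⁻¹)| + |log λ_min (B₂B₁⁻¹)ᵀ(B₂B₁⁻¹)|`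
computed from factorizations `Zᵢ = BᵢᵀBᵢ` is invariant under the congruence action
`Z ↦ AᵀZA` of `GL(n,ℝ)`, for any choice of factorizations. -/
theorem stmt_3 {n : ℕ} [Nonempty (Fin n)]
    (Z₁ Z₂ A B₁ B₂ C₁ C₂ : Matrix (Fin n) (Fin n) ℝ)
    (hZ₁ : Z₁.PosDef) (hZ₂ : Z₂.PosDef)
    (hA : IsUnit A.det) (hB₁ : IsUnit B₁.det) (hB₂ : IsUnit B₂.det)
    (hC₁ : IsUnit C₁.det) (hC₂ : IsUnit C₂.det)
    (hfB₁ : Z₁ = B₁ᵀ * B₁) (hfB₂ : Z₂ = B₂ᵀ * B₂)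
    (hfC₁ : Aᵀ * Z₁ * A = C₁ᵀ * C₁) (hfC₂ : Aᵀ * Z₂ * A = C₂ᵀ * C₂) :
    |Real.log (lamMax (C₂ * C₁⁻¹))| + |Real.log (lamMin (C₂ * C₁⁻¹))| =
      |Real.log (lamMax (B₂ * B₁⁻¹))| + |Real.log (lamMin (B₂ * B₁⁻¹))| := by
  set Q : Matrix (Fin n) (Fin n) ℝ := B₁ * A * C₁⁻¹ with hQ
  have hC₁i : C₁ * C₁⁻¹ = 1 := Matrix.mul_nonsing_inv _ hC₁
  have hC₁i' : C₁⁻¹ * C₁ = 1 := Matrix.nonsing_inv_mul _ hC₁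
  have hB₁i : B₁⁻¹ * B₁ = 1 := Matrix.nonsing_inv_mul _ hB₁
  have hQorth : Qᵀ * Q = 1 := by
    have h1 : Aᵀ * (B₁ᵀ * B₁) * A = C₁ᵀ * C₁ := by rw [← hfB₁]; exact hfC₁
    calc Qᵀ * Q = (C₁⁻¹)ᵀ * (Aᵀ * (B₁ᵀ * B₁) * A * C₁⁻¹) := by
          simp only [hQ, Matrix.transpose_mul, Matrix.mul_assoc]
      _ = (C₁⁻¹)ᵀ * (C₁ᵀ * (C₁ * C₁⁻¹)) := by rw [h1, Matrix.mul_assoc]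
      _ = 1 := by
          rw [hC₁i, Matrix.mul_one, ← Matrix.transpose_mul, hC₁i, Matrix.transpose_one]
  have hQQt : Q * Qᵀ = 1 := mul_eq_one_comm.mp hQorth
  have hconj : (C₂ * C₁⁻¹)ᵀ * (C₂ * C₁⁻¹) = Qᵀ * ((B₂ * B₁⁻¹)ᵀ * (B₂ * B₁⁻¹)) * Q := by
    have h2 : Aᵀ * (B₂ᵀ * B₂) * A = C₂ᵀ * C₂ := by rw [← hfB₂]; exact hfC₂
    have hkey : B₂ * B₁⁻¹ * Q = B₂ * (A * C₁⁻¹) := by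
      rw [hQ]
      simp only [← Matrix.mul_assoc]
      rw [Matrix.mul_assoc B₂ B₁⁻¹ B₁, hB₁i, Matrix.mul_one, Matrix.mul_assoc]
    calc (C₂ * C₁⁻¹)ᵀ * (C₂ * C₁⁻¹)
        = (C₁⁻¹)ᵀ * (C₂ᵀ * C₂) * C₁⁻¹ := by
          simp only [Matrix.transpose_mul, Matrix.mul_assoc]
      _ = (C₁⁻¹)ᵀ * (Aᵀ * (B₂ᵀ * B₂) * A) * C₁⁻¹ := by rw [h2]
      _ = (B₂ * (A * C₁⁻¹))ᵀ * (B₂ * (A * C₁⁻¹)) := by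
          simp only [Matrix.transpose_mul, Matrix.mul_assoc]
      _ = (B₂ * B₁⁻¹ * Q)ᵀ * (B₂ * B₁⁻¹ * Q) := by rw [hkey]
      _ = Qᵀ * ((B₂ * B₁⁻¹)ᵀ * (B₂ * B₁⁻¹)) * Q := by
          simp only [Matrix.transpose_mul, Matrix.mul_assoc]
  set u : (Matrix (Fin n) (Fin n) ℝ)ˣ := ⟨Qᵀ, Q, hQorth, hQQt⟩ with hu
  have hspec : spectrum ℝ ((C₂ * C₁⁻¹)ᵀ * (C₂ * C₁⁻¹))
      = spectrum ℝ ((B₂ * B₁⁻¹)ᵀ * (B₂ * B₁⁻¹)) := by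
    rw [hconj]
    exact spectrum.units_conjugate (u := u)
  obtain ⟨hmax, hmin⟩ := lam_eq_of_spectrum_eq hspec
  rw [hmax, hmin]
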